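/- Let p be a real number and define P(x) = p·x². Let L be the second-order differential operator LG(z) = ((1-z²)G'(z))' - 4G'(z)z - 6G(z) = (1-z²)G''(z) - 6zG'(z) - 6G(z). Then the function B(z) = -(z/6)p satisfies, for every real z, L(L+2)B(z) = (1/2)P'''(z)(1-z²) - 4P''(z)z - 6P'(z); both sides equal -20pz. -/
import Mathlib


/-- The second-order differential operator
`LG(z) = (1-z²)G''(z) - 6zG'(z) - 6G(z)`. -/
noncomputable def Lop (G : ℝ → ℝ) : ℝ → ℝ :=
  fun z => (1 - z ^ 2) * deriv (deriv G) z - 6 * z * deriv G z - 6 * G z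

/-- Derivative of a linear function `fun z => a * z`. -/
lemma deriv_linear (a : ℝ) : deriv (fun z : ℝ => a * z) = fun _ => a := by
  ext z
  simpa using ((hasDerivAt_id z).const_mul a).deriv

/-- `Lop` of a linear function. -/
lemma Lop_linear (a : ℝ) : Lop (fun z : ℝ => a * z) = fun z => -12 * a * z := by
  ext z
  simp [Lop, deriv_linear]
  ring

/-- For the quadratic profile `P(x) = p·x²`, the function `B(z) = -(z/6)p` satisfies
`L(L+2)B(z) = (1/2)P'''(z)(1-z²) - 4P''(z)z - 6P'(z)` for every real `z`;
both sides equal `-20pz`. -/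
theorem stmt_7 (p : ℝ) (P B : ℝ → ℝ)
    (hP : ∀ x, P x = p * x ^ 2)
    (hB : ∀ z, B z = -(z / 6) * p) :
    ∀ z : ℝ,
      Lop (fun w => Lop B w + 2 * B w) z
        = 1 / 2 * deriv (deriv (deriv P)) z * (1 - z ^ 2)
          - 4 * deriv (deriv P) z * z - 6 * deriv P z ∧
      Lop (fun w => Lop B w + 2 * B w) z = -20 * p * z ∧
      1 / 2 * deriv (deriv (deriv P)) z * (1 - z ^ 2)
          - 4 * deriv (deriv P) z * z - 6 * deriv P z = -20 * p * z := by
  have hBf : B = fun z => -(p / 6) * z := by funext z; rw [hB]; ring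
  have hPf : P = fun x => p * x ^ 2 := funext hP
  subst hBf hPf
  have hLB : Lop (fun z : ℝ => -(p / 6) * z) = fun z => 2 * p * z := by
    rw [Lop_linear]; funext z; ring
  have hsum : (fun w => Lop (fun z : ℝ => -(p / 6) * z) w
      + 2 * (-(p / 6) * w)) = fun w : ℝ => (5 / 3 * p) * w := by
    funext w; rw [hLB]; ring
  have hLHS : Lop (fun w => Lop (fun z : ℝ => -(p / 6) * z) w
      + 2 * (-(p / 6) * w)) = fun z => -12 * (5 / 3 * p) * z := by
    rw [hsum, Lop_linear]
  have hP1 : deriv (fun x : ℝ => p * x ^ 2) = fun x => p * (2 * x) := by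
    ext x
    simpa using ((hasDerivAt_pow 2 x).const_mul p).deriv
  have hP2 : deriv (deriv (fun x : ℝ => p * x ^ 2)) = fun _ => 2 * p := by
    rw [hP1]
    ext x
    have : (fun x : ℝ => p * (2 * x)) = fun x : ℝ => (2 * p) * x := by
      funext x; ring
    rw [this, deriv_linear]
  have hP3 : deriv (deriv (deriv (fun x : ℝ => p * x ^ 2))) = fun _ => (0 : ℝ) := by
    rw [hP2]; ext x; simp
  intro z
  rw [hLHS, hP3, hP2, hP1]
  refine ⟨by ring, by ring, by ring⟩
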